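/- For any integer p > 1, (1/p) · Σ' 1/|ζ−1|² = p/12 − 1/(12p), where the primed sum runs over all p-th roots of unity ζ ≠ 1 in ℂ. -/

import Mathlib

open Finset Complex Polynomial


/-- The set of `p`-th roots of unity in `ℂ` different from `1`. -/
noncomputable def nontrivialRootsOfUnity (p : ℕ) : Finset ℂ :=
  (Polynomial.nthRoots p (1 : ℂ)).toFinset.erase 1

lemma mem_ntru {p : ℕ} (hp : 0 < p) {x : ℂ} :
    x ∈ nontrivialRootsOfUnity p ↔ x ^ p = 1 ∧ x ≠ 1 := by
  simp [nontrivialRootsOfUnity, Polynomial.mem_nthRoots hp, and_comm]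


lemma sum_range_castC (n : ℕ) : (∑ i ∈ Finset.range n, (i:ℂ)) * 2 = n * (n-1) := by
  induction n with
  | zero => simp
  | succ m ih => rw [Finset.sum_range_succ]; push_cast; linear_combination ih

lemma sum_range_sqC (n : ℕ) : (∑ i ∈ Finset.range n, (i:ℂ)^2) * 6 = n * (n-1) * (2*n-1) := by
  induction n with
  | zero => simp
  | succ m ih => rw [Finset.sum_range_succ]; push_cast; linear_combination ih


lemma rootA {p : ℕ} (hp : 0 < p) {ζ : ℂ} (hζp : ζ ^ p = 1) (hζ1 : ζ ≠ 1) :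
    (ζ - 1) * (∑ j ∈ Finset.range p, (j:ℂ) * ζ ^ j) = p := by
  have hgeom : ∑ j ∈ Finset.range p, ζ ^ j = 0 := by
    rw [geom_sum_eq hζ1, hζp]; simp
  have htel : ∑ j ∈ Finset.range p,
      (((j:ℂ)+1) * ζ ^ (j+1) - (j:ℂ) * ζ ^ j) = p := by
    have := Finset.sum_range_sub (fun i => (i:ℂ) * ζ ^ i) p
    push_cast at this
    rw [this, hζp]; ring
  have hsplit : (ζ - 1) * (∑ j ∈ Finset.range p, (j:ℂ) * ζ ^ j)
      = (∑ j ∈ Finset.range p, (((j:ℂ)+1) * ζ ^ (j+1) - (j:ℂ) * ζ ^ j))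
        - ζ * ∑ j ∈ Finset.range p, ζ ^ j := by
    rw [Finset.mul_sum, Finset.mul_sum, ← Finset.sum_sub_distrib]
    apply Finset.sum_congr rfl
    intro j _
    ring
  rw [hsplit, htel, hgeom]; ring

lemma conj_root {p : ℕ} (hp : 0 < p) {ζ : ℂ} (hζp : ζ ^ p = 1) :
    (starRingEnd ℂ) ζ = ζ ^ (p - 1) := by
  have hζ0 : ζ ≠ 0 := by
    intro h; rw [h, zero_pow hp.ne'] at hζp; exact zero_ne_one hζp
  have h0 : 0 ≤ ‖ζ‖ := norm_nonneg _
  have h1 : ‖ζ‖ ^ p = 1 := by rw [← norm_pow, hζp, norm_one]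
  have habs : ‖ζ‖ = 1 := by
    rcases lt_trichotomy ‖ζ‖ 1 with h | h | h
    · have := pow_lt_one₀ h0 h hp.ne'
      rw [h1] at this; exact absurd this (lt_irrefl 1)
    · exact h
    · have := one_lt_pow₀ h hp.ne'
      rw [h1] at this; exact absurd this (lt_irrefl 1)
  have hns : Complex.normSq ζ = 1 := by
    rw [Complex.normSq_eq_norm_sq, habs]; norm_num
  apply mul_left_cancel₀ hζ0
  rw [Complex.mul_conj, hns, ← pow_succ', Nat.sub_add_cancel hp]
  exact_mod_cast hζp.symm


lemma dvd_iff_eq {p j k : ℕ} (hj : j < p) (hk : k < p) :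
    p ∣ j + (p - 1) * k ↔ j = k := by
  have hp : 0 < p := by omega
  constructor
  · intro h
    have h' : (p:ℤ) ∣ (j:ℤ) + ((p:ℤ) - 1) * k := by
      obtain ⟨c, hc⟩ := h
      refine ⟨c, ?_⟩
      have : ((j + (p-1)*k : ℕ) : ℤ) = (p:ℤ) * c := by exact_mod_cast hc
      push_cast [Nat.cast_sub (Nat.one_le_iff_ne_zero.2 hp.ne')] at this
      linarith
    have h2 : (p:ℤ) ∣ (j:ℤ) - k := by
      have : (j:ℤ) - k = ((j:ℤ) + ((p:ℤ)-1)*k) - p * k := by ring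
      rw [this]
      exact dvd_sub h' ⟨k, rfl⟩
    have := Int.eq_zero_of_abs_lt_dvd h2 (by
      rw [abs_lt]; constructor <;> [linarith [Int.ofNat_lt.2 hk]; linarith [Int.ofNat_lt.2 hj]])
    omega
  · rintro rfl
    refine ⟨j, ?_⟩
    have h1 : 1 ≤ p := hp
    zify [h1]
    ring

-- sum of m-th powers over all nontrivial p-th roots
lemma sum_pow_ntru {p : ℕ} (hp : 0 < p) (m : ℕ) :
    ∑ ζ ∈ nontrivialRootsOfUnity p, ζ ^ m = (if p ∣ m then (p:ℂ) else 0) - 1 := by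
  classical
  have : NeZero p := ⟨hp.ne'⟩
  obtain ⟨ζ₀, hprim⟩ : ∃ z : ℂ, IsPrimitiveRoot z p :=
    ⟨_, Complex.isPrimitiveRoot_exp p hp.ne'⟩
  have himg : (Polynomial.nthRoots p (1 : ℂ)).toFinset
      = (Finset.range p).image (ζ₀ ^ ·) := by
    ext x
    simp only [Multiset.mem_toFinset, Polynomial.mem_nthRoots hp, Finset.mem_image,
      Finset.mem_range]
    constructor
    · intro hx
      obtain ⟨i, hi, hix⟩ := hprim.eq_pow_of_pow_eq_one hx
      exact ⟨i, hi, hix⟩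
    · rintro ⟨i, _, rfl⟩
      rw [← pow_mul, mul_comm, pow_mul, hprim.pow_eq_one, one_pow]
  have h1 : (1:ℂ) ∈ (Polynomial.nthRoots p (1:ℂ)).toFinset := by
    simp [Polynomial.mem_nthRoots hp]
  have hsplit := Finset.sum_erase_add (Polynomial.nthRoots p (1:ℂ)).toFinset
    (fun ζ => ζ ^ m) h1
  have htot : ∑ ζ ∈ (Polynomial.nthRoots p (1:ℂ)).toFinset, ζ ^ m
      = (if p ∣ m then (p:ℂ) else 0) := by
    rw [himg, Finset.sum_image]
    · have : ∀ i ∈ Finset.range p, (ζ₀ ^ i) ^ m = (ζ₀ ^ m) ^ i := by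
        intro i _; rw [← pow_mul, mul_comm, pow_mul]
      rw [Finset.sum_congr rfl this]
      by_cases hdvd : p ∣ m
      · rw [(hprim.pow_eq_one_iff_dvd m).2 hdvd]
        simp [hdvd]
      · have hne : ζ₀ ^ m ≠ 1 := fun h => hdvd ((hprim.pow_eq_one_iff_dvd m).1 h)
        rw [geom_sum_eq hne, ← pow_mul, mul_comm, pow_mul, hprim.pow_eq_one, one_pow]
        simp [hdvd]
    · intro i hi j hj hij
      exact hprim.pow_inj (Finset.mem_range.1 hi) (Finset.mem_range.1 hj) hij
  have : ∑ ζ ∈ nontrivialRootsOfUnity p, ζ ^ m + 1 = (if p ∣ m then (p:ℂ) else 0) := by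
    rw [← htot, ← hsplit]; simp [nontrivialRootsOfUnity]
  linear_combination this

theorem sum_inv_normSq_roots (p : ℕ) (hp : 1 < p) :
    (1 / (p : ℝ)) * ∑ ζ ∈ nontrivialRootsOfUnity p, 1 / Complex.normSq (ζ - 1) =
      (p : ℝ) / 12 - 1 / (12 * (p : ℝ)) := by
  have hp0 : 0 < p := by omega
  set R := nontrivialRootsOfUnity p with hR
  have key : ∀ ζ ∈ R, ((p:ℂ))^2 * ((1 / Complex.normSq (ζ - 1) : ℝ) : ℂ)
      = ∑ j ∈ Finset.range p, ∑ k ∈ Finset.range p,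
          ((j:ℂ) * k) * ζ ^ (j + (p-1)*k) := by
    intro ζ hζ
    obtain ⟨hζp, hζ1⟩ := (mem_ntru hp0).1 hζ
    have hA := rootA hp0 hζp hζ1
    have hζp' : (ζ ^ (p-1)) ^ p = 1 := by
      rw [← pow_mul, mul_comm, pow_mul, hζp, one_pow]
    have hζ1' : ζ ^ (p-1) ≠ 1 := by
      intro h
      rw [← conj_root hp0 hζp] at h
      apply hζ1
      simpa using congrArg (starRingEnd ℂ) h
    have hB := rootA hp0 hζp' hζ1'
    have hN : ((Complex.normSq (ζ - 1) : ℝ) : ℂ) = (ζ - 1) * ((starRingEnd ℂ) ζ - 1) := by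
      rw [← Complex.mul_conj]; simp
    have hNne : Complex.normSq (ζ - 1) ≠ 0 := by
      simp [Complex.normSq_eq_zero, sub_eq_zero, hζ1]
    have hconj := conj_root hp0 hζp
    have hp2 : ((Complex.normSq (ζ - 1) : ℝ) : ℂ)
        * ((∑ j ∈ Finset.range p, (j:ℂ) * ζ ^ j)
          * (∑ k ∈ Finset.range p, (k:ℂ) * (ζ^(p-1)) ^ k)) = (p:ℂ)^2 := by
      rw [hN, hconj]
      calc (ζ-1) * (ζ^(p-1)-1)
            * ((∑ j ∈ Finset.range p, (j:ℂ) * ζ ^ j)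
              * (∑ k ∈ Finset.range p, (k:ℂ) * (ζ^(p-1)) ^ k))
          = ((ζ-1) * ∑ j ∈ Finset.range p, (j:ℂ) * ζ ^ j)
            * ((ζ^(p-1)-1) * ∑ k ∈ Finset.range p, (k:ℂ) * (ζ^(p-1)) ^ k) := by ring
        _ = (p:ℂ) * p := by rw [hA, hB]
        _ = (p:ℂ)^2 := by ring
    have hexp : (∑ j ∈ Finset.range p, (j:ℂ) * ζ ^ j)
          * (∑ k ∈ Finset.range p, (k:ℂ) * (ζ^(p-1)) ^ k)
        = ∑ j ∈ Finset.range p, ∑ k ∈ Finset.range p,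
            ((j:ℂ) * k) * ζ ^ (j + (p-1)*k) := by
      rw [Finset.sum_mul_sum]
      refine Finset.sum_congr rfl fun j _ => Finset.sum_congr rfl fun k _ => ?_
      rw [← pow_mul, pow_add]
      ring
    rw [← hexp]
    have hNC : ((Complex.normSq (ζ - 1) : ℝ) : ℂ) ≠ 0 := by exact_mod_cast hNne
    push_cast
    field_simp
    linear_combination -hp2
  have hsum : ((p:ℂ))^2 * ((∑ ζ ∈ R, 1 / Complex.normSq (ζ - 1) : ℝ) : ℂ)
      = (p:ℂ) * (∑ j ∈ Finset.range p, (j:ℂ)^2)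
        - (∑ j ∈ Finset.range p, (j:ℂ))^2 := by
    push_cast
    rw [Finset.mul_sum]
    rw [Finset.sum_congr rfl (fun ζ hζ => by
      have := key ζ hζ; push_cast at this ⊢; exact this)]
    rw [Finset.sum_comm]
    have hswap : ∀ j ∈ Finset.range p,
        ∑ ζ ∈ R, ∑ k ∈ Finset.range p, ((j:ℂ) * k) * ζ ^ (j + (p-1)*k)
        = (j:ℂ)^2 * p - (j:ℂ) * ∑ k ∈ Finset.range p, (k:ℂ) := by
      intro j hj
      rw [Finset.sum_comm]
      have h1 : ∀ k ∈ Finset.range p,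
          ∑ ζ ∈ R, ((j:ℂ) * k) * ζ ^ (j + (p-1)*k)
          = (if j = k then (j:ℂ)*k*p else 0) - (j:ℂ)*k := by
        intro k hk
        rw [← Finset.mul_sum, hR, sum_pow_ntru hp0,
          if_congr (dvd_iff_eq (Finset.mem_range.1 hj) (Finset.mem_range.1 hk)) rfl rfl]
        by_cases h : j = k <;> simp [h] <;> ring
      rw [Finset.sum_congr rfl h1, Finset.sum_sub_distrib, Finset.sum_ite_eq, if_pos hj,
        ← Finset.mul_sum]
      ring
    rw [Finset.sum_congr rfl hswap, Finset.sum_sub_distrib, ← Finset.sum_mul, ← Finset.sum_mul]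
    ring
  -- turn into a real equation
  have hreal : ((p:ℝ))^2 * (∑ ζ ∈ R, 1 / Complex.normSq (ζ - 1)) * 12
      = (p:ℝ)^2 * ((p:ℝ)^2 - 1) := by
    have h6 := sum_range_sqC p
    have h2 := sum_range_castC p
    have hC : ((p:ℂ))^2 * ((∑ ζ ∈ R, 1 / Complex.normSq (ζ - 1) : ℝ) : ℂ) * 12
        = (p:ℂ)^2 * ((p:ℂ)^2 - 1) := by
      linear_combination 12 * hsum + 2 * (p:ℂ) * h6
        - 3 * ((∑ i ∈ Finset.range p, (i:ℂ)) * 2 + (p:ℂ) * ((p:ℂ)-1)) * h2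
    exact_mod_cast hC
  have hpR : (p:ℝ) ≠ 0 := by positivity
  have hT : (∑ ζ ∈ R, 1 / Complex.normSq (ζ - 1)) = ((p:ℝ)^2 - 1) / 12 := by
    have hp2ne : (p:ℝ)^2 ≠ 0 := pow_ne_zero 2 hpR
    have h12 : (∑ ζ ∈ R, 1 / Complex.normSq (ζ - 1)) * 12 = (p:ℝ)^2 - 1 := by
      apply mul_left_cancel₀ hp2ne
      linear_combination hreal
    linarith
  rw [hR] at hT
  rw [hT]
  field_simp
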